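/- Let H be a real Hilbert space, A ⊆ H a nonempty bounded set, L > 0, and f : H → ℝ a convex Fréchet-differentiable function whose gradient ∇f is L-Lipschitz. Let x⋆ ∈ conv(A) satisfy f(x⋆) ≤ f(w) for all w ∈ conv(A), and let δ ∈ (0,1]. Let (x_t)_{t≥0} be a sequence with x₀ ∈ conv(A) such that for every t ≥ 0 there is z_t ∈ A with ⟪∇f(x_t), z_t − x_t⟫ ≤ δ·inf_{z∈A} ⟪∇f(x_t), z − x_t⟫ (a δ-approximate Frank–Wolfe linear minimization oracle output), and x_{t+1} = x_t + γ_t (z_t − x_t) where γ_t ∈ [0,1] minimizes γ ↦ γ·⟪∇f(x_t), z_t − x_t⟫ + (γ²L/2)·‖z_t − x_t‖² over γ ∈ [0,1]. Then for every t ≥ 0, f(x_t) − f(x⋆) ≤ 2·((1/δ)·L·diam(A)² + ε₀)/(δ·t + 2), where ε₀ := f(x₀) − f(x⋆). -/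

import Mathlib

open scoped RealInnerProductSpace Pointwise
open Set intervalIntegral

section FWAux

variable {H : Type*} [NormedAddCommGroup H] [InnerProductSpace ℝ H] [CompleteSpace H]

-- (aux lemmas spliced in by script)


lemma fw_aux_hasDerivAt (f : H → ℝ) (f' : H → H) (hdiff : ∀ w, HasGradientAt f (f' w) w)
    (x v : H) (t : ℝ) :
    HasDerivAt (fun s : ℝ => f (x + s • v)) ⟪f' (x + t • v), v⟫ t := by
  have h1 : HasDerivAt (fun s : ℝ => x + s • v) v t := by
    simpa using ((hasDerivAt_id t).smul_const v).const_add x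
  have h2 := ((hdiff (x + t • v)).hasFDerivAt.comp_hasDerivAt t h1)
  exact h2

lemma fw_descent (f : H → ℝ) (f' : H → H) (L : ℝ) (hL : 0 ≤ L)
    (hdiff : ∀ w, HasGradientAt f (f' w) w)
    (hLip : ∀ u v : H, ‖f' u - f' v‖ ≤ L * ‖u - v‖) (x v : H) :
    f (x + v) ≤ f x + ⟪f' x, v⟫ + L / 2 * ‖v‖ ^ 2 := by
  have hcontf' : Continuous f' := by
    rw [Metric.continuous_iff]
    intro b ε hε
    refine ⟨ε / (L + 1), by positivity, fun a ha => ?_⟩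
    have h1 : ‖f' a - f' b‖ ≤ L * ‖a - b‖ := hLip a b
    have h2 : ‖a - b‖ < ε / (L + 1) := by rwa [dist_eq_norm] at ha
    rw [dist_eq_norm]
    calc ‖f' a - f' b‖ ≤ L * ‖a - b‖ := h1
      _ ≤ (L + 1) * ‖a - b‖ := by nlinarith [norm_nonneg (a - b)]
      _ < (L + 1) * (ε / (L + 1)) := by
        apply mul_lt_mul_of_pos_left h2; linarith
      _ = ε := by field_simp
  have hderiv : ∀ t ∈ uIcc (0:ℝ) 1,
      HasDerivAt (fun s : ℝ => f (x + s • v)) ⟪f' (x + t • v), v⟫ t :=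
    fun t _ => fw_aux_hasDerivAt f f' hdiff x v t
  have hcont2 : Continuous fun t : ℝ => ⟪f' (x + t • v), v⟫ := by
    exact (hcontf'.comp (by continuity)).inner continuous_const
  have hint : IntervalIntegrable (fun t : ℝ => ⟪f' (x + t • v), v⟫) MeasureTheory.volume 0 1 :=
    hcont2.intervalIntegrable 0 1
  have heq := integral_eq_sub_of_hasDerivAt hderiv hint
  have hint2 : IntervalIntegrable (fun t : ℝ => ⟪f' x, v⟫ + L * ‖v‖ ^ 2 * t)
      MeasureTheory.volume 0 1 := by
    apply Continuous.intervalIntegrable; continuity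
  have hmono : (∫ t in (0:ℝ)..1, ⟪f' (x + t • v), v⟫) ≤
      ∫ t in (0:ℝ)..1, (⟪f' x, v⟫ + L * ‖v‖ ^ 2 * t) := by
    apply integral_mono_on zero_le_one hint hint2
    intro t ht
    have h1 : ⟪f' (x + t • v) - f' x, v⟫ ≤ ‖f' (x + t • v) - f' x‖ * ‖v‖ :=
      real_inner_le_norm _ _
    have h2 : ‖f' (x + t • v) - f' x‖ ≤ L * (t * ‖v‖) := by
      have := hLip (x + t • v) x
      simpa [norm_smul, abs_of_nonneg ht.1] using this
    have h3 : ⟪f' (x + t • v), v⟫ = ⟪f' x, v⟫ + ⟪f' (x + t • v) - f' x, v⟫ := by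
      rw [inner_sub_left]; ring
    have h4 : ‖f' (x + t • v) - f' x‖ * ‖v‖ ≤ L * (t * ‖v‖) * ‖v‖ :=
      mul_le_mul_of_nonneg_right h2 (norm_nonneg v)
    rw [h3]
    have : L * (t * ‖v‖) * ‖v‖ = L * ‖v‖ ^ 2 * t := by ring
    nlinarith
  have hval : (∫ t in (0:ℝ)..1, (⟪f' x, v⟫ + L * ‖v‖ ^ 2 * t)) =
      ⟪f' x, v⟫ + L / 2 * ‖v‖ ^ 2 := by
    rw [integral_add ((continuous_const).intervalIntegrable 0 1)
      (by apply Continuous.intervalIntegrable; continuity)]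
    rw [integral_const_mul, integral_id]
    simp
    ring
  have hφ : f (x + v) - f x ≤ ⟪f' x, v⟫ + L / 2 * ‖v‖ ^ 2 := by
    have := hmono
    rw [heq, hval] at this
    simpa using this
  linarith

lemma fw_convex_lb (f : H → ℝ) (f' : H → H) (hconv : ConvexOn ℝ Set.univ f)
    (hdiff : ∀ w, HasGradientAt f (f' w) w) (x y : H) :
    f x + ⟪f' x, y - x⟫ ≤ f y := by
  set v := y - x with hv
  have hd : HasDerivAt (fun s : ℝ => f (x + s • v)) ⟪f' x, v⟫ 0 := by
    simpa using fw_aux_hasDerivAt f f' hdiff x v 0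
  have hslope := hasDerivAt_iff_tendsto_slope.1 hd
  have htend : Filter.Tendsto (slope (fun s : ℝ => f (x + s • v)) 0)
      (nhdsWithin 0 (Set.Ioi 0)) (nhds ⟪f' x, v⟫) :=
    hslope.mono_left (nhdsWithin_mono 0 (fun t ht => ne_of_gt ht))
  have hbound : ∀ᶠ t in nhdsWithin (0:ℝ) (Set.Ioi 0),
      slope (fun s : ℝ => f (x + s • v)) 0 t ≤ f y - f x := by
    filter_upwards [Ioc_mem_nhdsGT (zero_lt_one)] with t ht
    have hcomb := hconv.2 (Set.mem_univ x) (Set.mem_univ y)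
      (by linarith [ht.2] : (0:ℝ) ≤ 1 - t) ht.1.le (by ring)
    have hxt : (1 - t) • x + t • y = x + t • v := by
      rw [hv]; module
    rw [hxt] at hcomb
    rw [slope_def_field]
    simp only [zero_smul, add_zero, sub_zero]
    simp only [smul_eq_mul] at hcomb
    rw [div_le_iff₀ ht.1]
    nlinarith [hcomb]
  have := le_of_tendsto htend hbound
  linarith


end FWAux

/-- Sublinear convergence of (norm-corrective / step-size-optimizing) Frank–Wolfe with a
δ-approximate linear minimization oracle (Theorem 1 / `thm:inexactFW`). -/
theorem frankWolfe_sublinear_convergence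
    {H : Type*} [NormedAddCommGroup H] [InnerProductSpace ℝ H] [CompleteSpace H]
    (A : Set H) (hA : A.Nonempty) (hAbdd : Bornology.IsBounded A)
    (L : ℝ) (hL : 0 < L)
    (f : H → ℝ) (f' : H → H)
    (hconv : ConvexOn ℝ Set.univ f)
    (hdiff : ∀ w : H, HasGradientAt f (f' w) w)
    (hLip : ∀ u v : H, ‖f' u - f' v‖ ≤ L * ‖u - v‖)
    (xstar : H) (hxstar : xstar ∈ convexHull ℝ A)
    (hmin : ∀ w ∈ convexHull ℝ A, f xstar ≤ f w)
    (δ : ℝ) (hδ : δ ∈ Set.Ioc (0:ℝ) 1)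
    (x z : ℕ → H) (γ : ℕ → ℝ)
    (hx0 : x 0 ∈ convexHull ℝ A)
    (hzA : ∀ t, z t ∈ A)
    (hlmo : ∀ t, ⟪f' (x t), z t - x t⟫ ≤ δ * sInf ((fun w => ⟪f' (x t), w - x t⟫) '' A))
    (hγmem : ∀ t, γ t ∈ Set.Icc (0:ℝ) 1)
    (hγmin : ∀ t, ∀ s ∈ Set.Icc (0:ℝ) 1,
        γ t * ⟪f' (x t), z t - x t⟫ + (γ t) ^ 2 * L / 2 * ‖z t - x t‖ ^ 2
          ≤ s * ⟪f' (x t), z t - x t⟫ + s ^ 2 * L / 2 * ‖z t - x t‖ ^ 2)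
    (hupd : ∀ t, x (t + 1) = x t + γ t • (z t - x t)) :
    ∀ t : ℕ, f (x t) - f xstar ≤
      2 * ((1 / δ) * L * (Metric.diam A) ^ 2 + (f (x 0) - f xstar)) / (δ * t + 2) := by
  obtain ⟨hδ0, hδ1⟩ := hδ
  have hAhull : A ⊆ convexHull ℝ A := subset_convexHull ℝ A
  have hconvhull : Convex ℝ (convexHull ℝ A) := convex_convexHull ℝ A
  have hxmem : ∀ t, x t ∈ convexHull ℝ A := by
    intro t; induction t with
    | zero => exact hx0
    | succ n ih =>
      rw [hupd n]
      exact hconvhull.add_smul_sub_mem ih (hAhull (hzA n)) (hγmem n)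
  set D := Metric.diam A with hD
  have hD0 : 0 ≤ D := Metric.diam_nonneg
  have hhullbdd : Bornology.IsBounded (convexHull ℝ A) := isBounded_convexHull.2 hAbdd
  have hdist : ∀ t, ‖z t - x t‖ ≤ D := by
    intro t
    have h1 := Metric.dist_le_diam_of_mem hhullbdd (hAhull (hzA t)) (hxmem t)
    rw [convexHull_diam] at h1
    rw [← hD] at h1
    simpa [dist_eq_norm] using h1
  set C := L * D ^ 2 with hC
  have hC0 : 0 ≤ C := by positivity
  have hh0 : ∀ t, 0 ≤ f (x t) - f xstar := fun t => sub_nonneg.2 (hmin _ (hxmem t))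
  -- gap bound
  have hg : ∀ t, ⟪f' (x t), z t - x t⟫ ≤ -(δ * (f (x t) - f xstar)) := by
    intro t
    set c := sInf ((fun w => ⟪f' (x t), w - x t⟫) '' A) with hc
    have hlb : c ≤ ⟪f' (x t), xstar - x t⟫ := by
      obtain ⟨r, hr⟩ := hAbdd.subset_closedBall 0
      have hbdd : BddBelow ((fun w => ⟪f' (x t), w - x t⟫) '' A) := by
        refine ⟨-(‖f' (x t)‖ * (r + ‖x t‖)), ?_⟩
        rintro _ ⟨w, hw, rfl⟩
        have h1 : |⟪f' (x t), w - x t⟫| ≤ ‖f' (x t)‖ * ‖w - x t‖ := abs_real_inner_le_norm _ _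
        have h2 : ‖w‖ ≤ r := by simpa using hr hw
        have h3 : ‖w - x t‖ ≤ r + ‖x t‖ := (norm_sub_le _ _).trans (by linarith)
        have h4 : ‖f' (x t)‖ * ‖w - x t‖ ≤ ‖f' (x t)‖ * (r + ‖x t‖) :=
          mul_le_mul_of_nonneg_left h3 (norm_nonneg _)
        have := abs_le.1 (h1.trans h4)
        linarith [this.1]
      have hsub : convexHull ℝ A ⊆ {w : H | c + ⟪f' (x t), x t⟫ ≤ ⟪f' (x t), w⟫} := by
        apply convexHull_min
        · intro w hw
          have h5 : c ≤ ⟪f' (x t), w - x t⟫ := csInf_le hbdd ⟨w, hw, rfl⟩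
          simp only [Set.mem_setOf_eq]
          rw [inner_sub_right] at h5
          linarith
        · exact convex_halfSpace_ge
            ⟨fun a b => inner_add_right _ _ _, fun r a => real_inner_smul_right _ _ _⟩ _
      have := hsub hxstar
      simp only [Set.mem_setOf_eq] at this
      rw [inner_sub_right]
      linarith
    have h2 : ⟪f' (x t), xstar - x t⟫ ≤ -(f (x t) - f xstar) := by
      have := fw_convex_lb f f' hconv hdiff (x t) xstar
      linarith
    calc ⟪f' (x t), z t - x t⟫ ≤ δ * c := hlmo t
      _ ≤ δ * (-(f (x t) - f xstar)) :=
        mul_le_mul_of_nonneg_left (hlb.trans h2) hδ0.le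
      _ = -(δ * (f (x t) - f xstar)) := by ring
  -- key recursion
  have key : ∀ t, ∀ s ∈ Set.Icc (0:ℝ) 1,
      f (x (t+1)) - f xstar ≤
        (f (x t) - f xstar) - s * (δ * (f (x t) - f xstar)) + s ^ 2 * C / 2 := by
    intro t s hs
    have hdesc : f (x (t+1)) ≤ f (x t) + γ t * ⟪f' (x t), z t - x t⟫
        + (γ t) ^ 2 * L / 2 * ‖z t - x t‖ ^ 2 := by
      have hd := fw_descent f f' L hL.le hdiff hLip (x t) (γ t • (z t - x t))
      rw [← hupd t] at hd
      rw [real_inner_smul_right, norm_smul, mul_pow] at hd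
      have habs : |γ t| ^ 2 = (γ t) ^ 2 := sq_abs _
      simp only [Real.norm_eq_abs] at hd
      rw [habs] at hd
      calc f (x (t+1)) ≤ f (x t) + γ t * ⟪f' (x t), z t - x t⟫
            + L / 2 * ((γ t) ^ 2 * ‖z t - x t‖ ^ 2) := hd
        _ = f (x t) + γ t * ⟪f' (x t), z t - x t⟫
            + (γ t) ^ 2 * L / 2 * ‖z t - x t‖ ^ 2 := by ring
    have hopt := hγmin t s hs
    have hn2 : ‖z t - x t‖ ^ 2 ≤ D ^ 2 := by
      nlinarith [hdist t, norm_nonneg (z t - x t)]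
    have hzb : s ^ 2 * L / 2 * ‖z t - x t‖ ^ 2 ≤ s ^ 2 * C / 2 := by
      rw [hC]
      nlinarith [mul_nonneg (mul_nonneg (sq_nonneg s) hL.le) (sub_nonneg.2 hn2)]
    have hgs : s * ⟪f' (x t), z t - x t⟫ ≤ s * (-(δ * (f (x t) - f xstar))) :=
      mul_le_mul_of_nonneg_left (hg t) hs.1
    nlinarith [hdesc, hopt, hzb, hgs]
  -- induction
  set M := 1 / δ * L * D ^ 2 + (f (x 0) - f xstar) with hM
  have hM0 : 0 ≤ M := by
    have h1 : 0 ≤ 1 / δ * L * D ^ 2 := by positivity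
    have := hh0 0
    rw [hM]; linarith
  have hδM : C ≤ δ * M := by
    have h1 : δ * M = C + δ * (f (x 0) - f xstar) := by
      rw [hM, hC]; field_simp
    nlinarith [hh0 0, hδ0]
  have hM1 : f (x 0) - f xstar ≤ M := by
    have h1 : 0 ≤ 1 / δ * L * D ^ 2 := by positivity
    rw [hM]; linarith
  clear_value D C M
  intro t
  induction t with
  | zero =>
    simp only [Nat.cast_zero, mul_zero, zero_add]
    rw [show (2:ℝ) * M / 2 = M by ring]
    exact hM1
  | succ n ih =>
    set a := δ * (n:ℝ) + 2 with ha
    have ha2 : 2 ≤ a := by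
      have : 0 ≤ δ * (n:ℝ) := by positivity
      rw [ha]; linarith
    have ha0 : 0 < a := by linarith
    set s := 2 / a with hs
    have hs0 : 0 < s := by positivity
    have hs1 : s ≤ 1 := by rw [hs, div_le_one ha0]; linarith
    have hk := key n s ⟨hs0.le, hs1⟩
    clear_value s a
    have hδs : δ * s ≤ 1 := by
      calc δ * s ≤ 1 * s := mul_le_mul_of_nonneg_right hδ1 hs0.le
        _ ≤ 1 := by linarith
    have hhn : f (x n) - f xstar ≤ M * s := by
      have : M * s = 2 * M / a := by rw [hs]; ring
      rw [this]; exact ih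
    have h1 : f (x (n+1)) - f xstar ≤ M * s - s ^ 2 * (δ * M) / 2 := by
      nlinarith [hk, hhn, hδM, sq_nonneg s, hs0.le,
        mul_nonneg (sub_nonneg.2 hhn) (sub_nonneg.2 hδs),
        mul_nonneg (sq_nonneg s) (sub_nonneg.2 hδM)]
    have hcast : δ * ((n+1 : ℕ):ℝ) + 2 = a + δ := by push_cast; rw [ha]; ring
    rw [hcast]
    have haδ : 0 < a + δ := by linarith
    have heq : 2 * M / (a + δ) - (M * s - s ^ 2 * (δ * M) / 2)
        = 2 * M * δ ^ 2 / (a ^ 2 * (a + δ)) := by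
      rw [hs]; field_simp; ring
    have hpos : 0 ≤ 2 * M * δ ^ 2 / (a ^ 2 * (a + δ)) := by positivity
    linarith
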